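/- Fix η ∈ ℝ, λ ≥ 0 and β ∈ [0,1], and suppose the feasible set X is nonempty. Then the linear program min_{x ∈ X} f(x,η), where f(x,η) = (1/n)·∑_{t,s,a} [ c(t,s,a)·x(t,s,a) + λ·x(t,s,a)·( β·(c(t,s,a) − η)⁺ + (1−β)·(η − c(t,s,a))⁺ ) ], attains its minimum at some x* ∈ X that is deterministic: for every pair (t,s) there is at most one action a ∈ A with x*(t,s,a) > 0. -/

import Mathlib

/-- Feasible set `X` of state-action probabilities for the cyclic MDP. -/
def Feasible {n : ℕ} [NeZero n] {S A : Type*} [Fintype S] [Fintype A]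
    (p : ZMod n → S → A → S → ℝ) (x : ZMod n → S → A → ℝ) : Prop :=
  (∀ t s a, 0 ≤ x t s a) ∧
  (∀ t : ZMod n, ∑ s, ∑ a, x t s a = 1) ∧
  (∀ (t : ZMod n) (s : S), ∑ a, x (t + 1) s a = ∑ s', ∑ a, x t s' a * p t s' a s)

/-- The risk-averse objective `f(x, η)`. -/
noncomputable def objF {n : ℕ} [NeZero n] {S A : Type*} [Fintype S] [Fintype A]
    (c : ZMod n → S → A → ℝ) (lam β : ℝ) (x : ZMod n → S → A → ℝ) (η : ℝ) : ℝ :=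
  (1 / (n : ℝ)) * ∑ t, ∑ s, ∑ a,
    (c t s a * x t s a +
      lam * x t s a * (β * max (c t s a - η) 0 + (1 - β) * max (η - c t s a) 0))

open Finset

section Helpers

open scoped Classical

variable {n : ℕ} [NeZero n] {S A : Type*} [Fintype S] [Fintype A]

/-- Swapping sums against a stochastic kernel. -/
lemma sum_kernel_swap (p : ZMod n → S → A → S → ℝ)
    (hp1 : ∀ t s a, ∑ s', p t s a s' = 1) (y : ZMod n → S → A → ℝ) (t : ZMod n) :
    ∑ s, ∑ s', ∑ a, y t s' a * p t s' a s = ∑ s', ∑ a, y t s' a := by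
  rw [Finset.sum_comm]
  refine Finset.sum_congr rfl fun s' _ => ?_
  rw [Finset.sum_comm]
  refine Finset.sum_congr rfl fun a _ => ?_
  rw [← Finset.mul_sum, hp1, mul_one]

/-- If a signed vector satisfies the balance equations, its per-time totals are constant. -/
lemma total_const (p : ZMod n → S → A → S → ℝ)
    (hp1 : ∀ t s a, ∑ s', p t s a s' = 1) (d : ZMod n → S → A → ℝ)
    (hbal : ∀ (t : ZMod n) (s : S), ∑ a, d (t + 1) s a = ∑ s', ∑ a, d t s' a * p t s' a s)
    (t : ZMod n) : ∑ s, ∑ a, d t s a = ∑ s, ∑ a, d 0 s a := by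
  have hstep : ∀ u : ZMod n, ∑ s, ∑ a, d (u + 1) s a = ∑ s, ∑ a, d u s a := by
    intro u
    calc ∑ s, ∑ a, d (u + 1) s a = ∑ s, ∑ s', ∑ a, d u s' a * p u s' a s :=
          Finset.sum_congr rfl fun s _ => hbal u s
      _ = ∑ s', ∑ a, d u s' a := sum_kernel_swap p hp1 d u
  have hnat : ∀ k : ℕ, ∑ s, ∑ a, d (k : ZMod n) s a = ∑ s, ∑ a, d 0 s a := by
    intro k
    induction k with
    | zero => simp
    | succ k ih =>
      have : ((k + 1 : ℕ) : ZMod n) = (k : ZMod n) + 1 := by push_cast; ring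
      rw [this, hstep, ih]
  have ht : ((t.val : ℕ) : ZMod n) = t := ZMod.natCast_rightInverse t
  rw [← ht, hnat]

/-- Mass-zero states receive no transition probability from the support of a
feasible point. -/
lemma zero_mass (p : ZMod n → S → A → S → ℝ) (hp0 : ∀ t s a s', 0 ≤ p t s a s')
    (x : ZMod n → S → A → ℝ) (hx : Feasible p x) (t : ZMod n) (s : S)
    (h : ∑ a, x (t + 1) s a = 0) :
    (∀ a, x (t + 1) s a = 0) ∧ (∀ s' a', x t s' a' ≠ 0 → p t s' a' s = 0) := by
  obtain ⟨hxpos, hxsum, hxbal⟩ := hx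
  constructor
  · intro a
    exact (Finset.sum_eq_zero_iff_of_nonneg (fun a _ => hxpos _ _ _)).mp h a (mem_univ a)
  · intro s' a' hne
    have h0 : ∑ s'', ∑ a, x t s'' a * p t s'' a s = 0 := by rw [← hxbal t s, h]
    have hinner : ∀ s'' ∈ (univ : Finset S), 0 ≤ ∑ a, x t s'' a * p t s'' a s :=
      fun s'' _ => Finset.sum_nonneg fun a _ => mul_nonneg (hxpos _ _ _) (hp0 _ _ _ _)
    have h1 : ∑ a, x t s' a * p t s' a s = 0 :=
      (Finset.sum_eq_zero_iff_of_nonneg hinner).mp h0 s' (mem_univ s')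
    have h2 : x t s' a' * p t s' a' s = 0 :=
      (Finset.sum_eq_zero_iff_of_nonneg
        (fun a _ => mul_nonneg (hxpos _ _ _) (hp0 _ _ _ _))).mp h1 a' (mem_univ a')
    rcases mul_eq_zero.mp h2 with h3 | h3
    · exact absurd h3 hne
    · exact h3

/-- The extension-by-zero linear map from functions on the support of `x`. -/
noncomputable def Emap (x : ZMod n → S → A → ℝ) :
    ({u : ZMod n × S × A // x u.1 u.2.1 u.2.2 ≠ 0} → ℝ) →ₗ[ℝ] (ZMod n → S → A → ℝ) where
  toFun f := fun t s a => if h : x t s a ≠ 0 then f ⟨(t, s, a), h⟩ else 0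
  map_add' f g := by
    funext t s a
    by_cases h : x t s a = 0 <;> simp [h]
  map_smul' r f := by
    funext t s a
    by_cases h : x t s a = 0 <;> simp [h]

/-- The constraint map: balance defects at positive-mass states, plus total mass at
time `0`. -/
noncomputable def Psimap (p : ZMod n → S → A → S → ℝ) (x : ZMod n → S → A → ℝ) :
    (ZMod n → S → A → ℝ) →ₗ[ℝ]
      (({v : ZMod n × S // (∑ a, x (v.1 + 1) v.2 a) ≠ 0} → ℝ) × ℝ) where
  toFun y :=
    (fun v => (∑ a, y (v.1.1 + 1) v.1.2 a) - ∑ s', ∑ a, y v.1.1 s' a * p v.1.1 s' a v.1.2,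
      ∑ s, ∑ a, y 0 s a)
  map_add' y z := by
    refine Prod.ext ?_ ?_
    · funext v
      simp [Finset.sum_add_distrib, add_mul]
      ring
    · simp [Finset.sum_add_distrib]
  map_smul' r y := by
    refine Prod.ext ?_ ?_
    · funext v
      simp [Finset.mul_sum, mul_sub, mul_assoc]
    · simp [Finset.mul_sum]

/-- The key existence lemma: if a feasible point randomizes at some state, there is a
nonzero feasible direction supported on its support. -/
lemma exists_direction (p : ZMod n → S → A → S → ℝ)
    (hp0 : ∀ t s a s', 0 ≤ p t s a s') (hp1 : ∀ t s a, ∑ s', p t s a s' = 1)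
    (x : ZMod n → S → A → ℝ) (hx : Feasible p x)
    (t0 : ZMod n) (s0 : S) (a1 a2 : A) (ha : a1 ≠ a2)
    (h1 : x t0 s0 a1 ≠ 0) (h2 : x t0 s0 a2 ≠ 0) :
    ∃ d : ZMod n → S → A → ℝ, d ≠ 0 ∧
      (∀ t s a, x t s a = 0 → d t s a = 0) ∧
      (∀ t, ∑ s, ∑ a, d t s a = 0) ∧
      (∀ (t : ZMod n) (s : S), ∑ a, d (t + 1) s a = ∑ s', ∑ a, d t s' a * p t s' a s) := by
  obtain ⟨hxpos, hxsum, hxbal⟩ := hx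
  set Φ : ({u : ZMod n × S × A // x u.1 u.2.1 u.2.2 ≠ 0} → ℝ) →ₗ[ℝ]
      (({v : ZMod n × S // (∑ a, x (v.1 + 1) v.2 a) ≠ 0} → ℝ) × ℝ) :=
    (Psimap p x).comp (Emap x) with hΦ
  -- the support property of extended functions
  have hEsupp : ∀ (f : {u : ZMod n × S × A // x u.1 u.2.1 u.2.2 ≠ 0} → ℝ) t s a,
      x t s a = 0 → Emap x f t s a = 0 := by
    intro f t s a h
    simp only [Emap, LinearMap.coe_mk, AddHom.coe_mk]
    rw [dif_neg]
    simp [h]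
  -- the key telescoping identity
  have hkey : ∀ f : {u : ZMod n × S × A // x u.1 u.2.1 u.2.2 ≠ 0} → ℝ,
      ∑ v : {v : ZMod n × S // (∑ a, x (v.1 + 1) v.2 a) ≠ 0}, (Φ f).1 v = 0 := by
    intro f
    set y := Emap x f with hy
    have hPhi1 : ∀ v : {v : ZMod n × S // (∑ a, x (v.1 + 1) v.2 a) ≠ 0},
        (Φ f).1 v = (∑ a, y (v.1.1 + 1) v.1.2 a)
          - ∑ s', ∑ a, y v.1.1 s' a * p v.1.1 s' a v.1.2 := fun v => rfl
    set g : ZMod n × S → ℝ := fun w =>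
      (∑ a, y (w.1 + 1) w.2 a) - ∑ s', ∑ a, y w.1 s' a * p w.1 s' a w.2 with hg
    have hsum1 : ∑ v : {v : ZMod n × S // (∑ a, x (v.1 + 1) v.2 a) ≠ 0}, (Φ f).1 v
        = ∑ w ∈ univ.filter (fun w : ZMod n × S => (∑ a, x (w.1 + 1) w.2 a) ≠ 0), g w := by
      rw [Finset.sum_congr rfl fun v _ => hPhi1 v]
      exact (Finset.sum_subtype _ (by simp) g).symm
    have hzero : ∀ w : ZMod n × S, g w ≠ 0 → (∑ a, x (w.1 + 1) w.2 a) ≠ 0 := by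
      intro w hgw hμ
      apply hgw
      have hzm := zero_mass p hp0 x ⟨hxpos, hxsum, hxbal⟩ w.1 w.2 hμ
      have hA : ∑ a, y (w.1 + 1) w.2 a = 0 :=
        Finset.sum_eq_zero fun a _ => hEsupp f _ _ _ (hzm.1 a)
      have hB : ∑ s', ∑ a, y w.1 s' a * p w.1 s' a w.2 = 0 := by
        refine Finset.sum_eq_zero fun s' _ => Finset.sum_eq_zero fun a _ => ?_
        by_cases hya : y w.1 s' a = 0
        · rw [hya, zero_mul]
        · have hxa : x w.1 s' a ≠ 0 := by
            intro h0; exact hya (hEsupp f _ _ _ h0)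
          rw [hzm.2 s' a hxa, mul_zero]
      simp [hg, hA, hB]
    have hsum2 : ∑ w ∈ univ.filter (fun w : ZMod n × S => (∑ a, x (w.1 + 1) w.2 a) ≠ 0), g w
        = ∑ w : ZMod n × S, g w :=
      Finset.sum_filter_of_ne fun w _ hgw => hzero w hgw
    rw [hsum1, hsum2]
    rw [Fintype.sum_prod_type]
    have hper : ∀ t : ZMod n, ∑ s, g (t, s)
        = (∑ s, ∑ a, y (t + 1) s a) - ∑ s, ∑ a, y t s a := by
      intro t
      rw [Finset.sum_sub_distrib]
      congr 1
      exact sum_kernel_swap p hp1 y t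
    rw [Finset.sum_congr rfl fun t _ => hper t, Finset.sum_sub_distrib]
    have : ∑ t : ZMod n, ∑ s, ∑ a, y (t + 1) s a = ∑ t : ZMod n, ∑ s, ∑ a, y t s a :=
      Fintype.sum_equiv (Equiv.addRight 1) _ _ (fun t => rfl)
    rw [this, sub_self]
  -- nonemptiness of the positive-mass index type
  have hC0 : (∑ a, x t0 s0 a) ≠ 0 := by
    have : 0 < ∑ a, x t0 s0 a :=
      Finset.sum_pos' (fun a _ => hxpos _ _ _)
        ⟨a1, mem_univ a1, lt_of_le_of_ne (hxpos _ _ _) (Ne.symm h1)⟩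
    exact ne_of_gt this
  haveI hCne : Nonempty {v : ZMod n × S // (∑ a, x (v.1 + 1) v.2 a) ≠ 0} := by
    refine ⟨⟨(t0 - 1, s0), ?_⟩⟩
    simpa [sub_add_cancel] using hC0
  -- the sum functional
  set ψ : (({v : ZMod n × S // (∑ a, x (v.1 + 1) v.2 a) ≠ 0} → ℝ) × ℝ) →ₗ[ℝ] ℝ :=
    { toFun := fun u => ∑ v, u.1 v
      map_add' := fun u w => by simp [Finset.sum_add_distrib]
      map_smul' := fun r u => by simp [Finset.mul_sum] } with hψ
  have hrange : LinearMap.range Φ ≤ LinearMap.ker ψ := by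
    rintro _ ⟨f, rfl⟩
    exact hkey f
  have hsurj : Function.Surjective ψ := by
    intro r
    obtain ⟨v0⟩ := hCne
    refine ⟨((fun v => if v = v0 then r else 0), 0), ?_⟩
    simp [hψ]
  -- dimension count
  have hfd : Module.finrank ℝ
      ((({v : ZMod n × S // (∑ a, x (v.1 + 1) v.2 a) ≠ 0} → ℝ) × ℝ)) =
      Fintype.card {v : ZMod n × S // (∑ a, x (v.1 + 1) v.2 a) ≠ 0} + 1 := by
    simp [Module.finrank_prod, Module.finrank_pi, Module.finrank_self]
  have hkerψ : Module.finrank ℝ (LinearMap.ker ψ) =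
      Fintype.card {v : ZMod n × S // (∑ a, x (v.1 + 1) v.2 a) ≠ 0} := by
    have hrn := LinearMap.finrank_range_add_finrank_ker ψ
    rw [LinearMap.range_eq_top.mpr hsurj, finrank_top, Module.finrank_self, hfd] at hrn
    omega
  -- injection from positive-mass states into the support, missing (t0, s0, a2)
  have hex : ∀ v : {v : ZMod n × S // (∑ a, x (v.1 + 1) v.2 a) ≠ 0},
      ∃ a, x (v.1.1 + 1) v.1.2 a ≠ 0 := by
    intro v
    obtain ⟨a, _, haa⟩ := Finset.exists_ne_zero_of_sum_ne_zero v.2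
    exact ⟨a, haa⟩
  set pick : {v : ZMod n × S // (∑ a, x (v.1 + 1) v.2 a) ≠ 0} → A := fun v =>
    if h : v.1.1 + 1 = t0 ∧ v.1.2 = s0 then a1 else (hex v).choose with hpickdef
  have hpick : ∀ v, x (v.1.1 + 1) v.1.2 (pick v) ≠ 0 := by
    intro v
    by_cases h : v.1.1 + 1 = t0 ∧ v.1.2 = s0
    · rw [hpickdef]
      simp only [dif_pos h]
      rw [h.1, h.2]
      exact h1
    · rw [hpickdef]
      simp only [dif_neg h]
      exact (hex v).choose_spec
  set ι : {v : ZMod n × S // (∑ a, x (v.1 + 1) v.2 a) ≠ 0} →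
      {u : ZMod n × S × A // x u.1 u.2.1 u.2.2 ≠ 0} := fun v =>
    ⟨(v.1.1 + 1, v.1.2, pick v), hpick v⟩ with hιdef
  have hinj : Function.Injective ι := by
    intro v w h
    have h' : (v.1.1 + 1, v.1.2, pick v) = (w.1.1 + 1, w.1.2, pick w) :=
      congrArg Subtype.val h
    have e1 : v.1.1 + 1 = w.1.1 + 1 := congrArg Prod.fst h'
    have e2 : v.1.2 = w.1.2 := congrArg (fun z => z.2.1) h'
    have e1' : v.1.1 = w.1.1 := by
      have := add_right_cancel e1
      exact this
    apply Subtype.ext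
    exact Prod.ext e1' e2
  have hnm : (⟨(t0, s0, a2), h2⟩ : {u : ZMod n × S × A // x u.1 u.2.1 u.2.2 ≠ 0})
      ∉ Set.range ι := by
    rintro ⟨v, hv⟩
    have h' : (v.1.1 + 1, v.1.2, pick v) = (t0, s0, a2) := congrArg Subtype.val hv
    have e1 : v.1.1 + 1 = t0 := congrArg Prod.fst h'
    have e2 : v.1.2 = s0 := congrArg (fun z => z.2.1) h'
    have e3 : pick v = a2 := congrArg (fun z => z.2.2) h'
    have : pick v = a1 := by
      rw [hpickdef]
      simp only [dif_pos (And.intro e1 e2)]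
    exact ha (this ▸ e3)
  have hcard : Fintype.card {v : ZMod n × S // (∑ a, x (v.1 + 1) v.2 a) ≠ 0}
      < Fintype.card {u : ZMod n × S × A // x u.1 u.2.1 u.2.2 ≠ 0} :=
    Fintype.card_lt_of_injective_of_notMem ι hinj hnm
  -- nontrivial kernel
  have hker : LinearMap.ker Φ ≠ ⊥ := by
    intro hbot
    have hinjΦ : Function.Injective Φ := LinearMap.ker_eq_bot.mp hbot
    have e1 : Module.finrank ℝ ({u : ZMod n × S × A // x u.1 u.2.1 u.2.2 ≠ 0} → ℝ)
        = Module.finrank ℝ (LinearMap.range Φ) :=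
      (LinearMap.finrank_range_of_inj hinjΦ).symm
    have e2 : Module.finrank ℝ (LinearMap.range Φ) ≤ Module.finrank ℝ (LinearMap.ker ψ) :=
      Submodule.finrank_mono hrange
    rw [Module.finrank_pi] at e1
    omega
  obtain ⟨f, hfker, hf0⟩ := (Submodule.ne_bot_iff _).mp hker
  set d := Emap x f with hd
  have hΦf : Φ f = 0 := hfker
  have hbalC : ∀ v : {v : ZMod n × S // (∑ a, x (v.1 + 1) v.2 a) ≠ 0},
      (∑ a, d (v.1.1 + 1) v.1.2 a) - ∑ s', ∑ a, d v.1.1 s' a * p v.1.1 s' a v.1.2 = 0 := by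
    intro v
    have := congrFun (congrArg Prod.fst hΦf) v
    exact this
  have htot0 : ∑ s, ∑ a, d 0 s a = 0 := congrArg Prod.snd hΦf
  have hsupp : ∀ t s a, x t s a = 0 → d t s a = 0 := hEsupp f
  -- balance everywhere
  have hbal : ∀ (t : ZMod n) (s : S),
      ∑ a, d (t + 1) s a = ∑ s', ∑ a, d t s' a * p t s' a s := by
    intro t s
    by_cases hμ : (∑ a, x (t + 1) s a) = 0
    · have hzm := zero_mass p hp0 x ⟨hxpos, hxsum, hxbal⟩ t s hμ
      have hA : ∑ a, d (t + 1) s a = 0 :=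
        Finset.sum_eq_zero fun a _ => hsupp _ _ _ (hzm.1 a)
      have hB : ∑ s', ∑ a, d t s' a * p t s' a s = 0 := by
        refine Finset.sum_eq_zero fun s' _ => Finset.sum_eq_zero fun a _ => ?_
        by_cases hda : d t s' a = 0
        · rw [hda, zero_mul]
        · have hxa : x t s' a ≠ 0 := fun h0 => hda (hsupp _ _ _ h0)
          rw [hzm.2 s' a hxa, mul_zero]
      rw [hA, hB]
    · exact sub_eq_zero.mp (hbalC ⟨(t, s), hμ⟩)
  have hsums : ∀ t : ZMod n, ∑ s, ∑ a, d t s a = 0 := by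
    intro t
    rw [total_const p hp1 d hbal t, htot0]
  -- d ≠ 0
  have hdne : d ≠ 0 := by
    intro h0
    apply hf0
    funext u
    have : d u.1.1 u.1.2.1 u.1.2.2 = f u := by
      show (if h : x u.1.1 u.1.2.1 u.1.2.2 ≠ 0
        then f ⟨(u.1.1, u.1.2.1, u.1.2.2), h⟩ else 0) = f u
      rw [dif_pos u.2]
    rw [h0] at this
    simpa using this.symm
  exact ⟨d, hdne, hsupp, hsums, hbal⟩

/-- Linearity of `objF` under affine combinations. -/
lemma objF_combo (c : ZMod n → S → A → ℝ) (lam β η ε : ℝ) (x d : ZMod n → S → A → ℝ) :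
    objF c lam β (fun t s a => x t s a + ε * d t s a) η
      = objF c lam β x η + ε * objF c lam β d η := by
  simp only [objF]
  rw [show (∑ t, ∑ s, ∑ a,
      (c t s a * (x t s a + ε * d t s a) +
        lam * (x t s a + ε * d t s a) *
          (β * max (c t s a - η) 0 + (1 - β) * max (η - c t s a) 0)))
    = ∑ t, ∑ s, ∑ a,
      ((c t s a * x t s a +
        lam * x t s a * (β * max (c t s a - η) 0 + (1 - β) * max (η - c t s a) 0)) +
       ε * (c t s a * d t s a +
        lam * d t s a * (β * max (c t s a - η) 0 + (1 - β) * max (η - c t s a) 0)))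
    from Finset.sum_congr rfl fun t _ => Finset.sum_congr rfl fun s _ =>
      Finset.sum_congr rfl fun a _ => by ring]
  simp only [Finset.sum_add_distrib, ← Finset.mul_sum]
  ring

/-- Feasibility of affine perturbations along feasible directions. -/
lemma feasible_combo (p : ZMod n → S → A → S → ℝ) (x d : ZMod n → S → A → ℝ)
    (hx : Feasible p x)
    (hdsum : ∀ t, ∑ s, ∑ a, d t s a = 0)
    (hdbal : ∀ (t : ZMod n) (s : S), ∑ a, d (t + 1) s a = ∑ s', ∑ a, d t s' a * p t s' a s)
    (ε : ℝ) (hpos : ∀ t s a, 0 ≤ x t s a + ε * d t s a) :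
    Feasible p (fun t s a => x t s a + ε * d t s a) := by
  obtain ⟨hxpos, hxsum, hxbal⟩ := hx
  refine ⟨hpos, ?_, ?_⟩
  · intro t
    have : ∑ s, ∑ a, (x t s a + ε * d t s a)
        = (∑ s, ∑ a, x t s a) + ε * ∑ s, ∑ a, d t s a := by
      simp [Finset.sum_add_distrib, Finset.mul_sum]
    rw [this, hxsum, hdsum, mul_zero, add_zero]
  · intro t s
    have lhs : ∑ a, (x (t + 1) s a + ε * d (t + 1) s a)
        = (∑ a, x (t + 1) s a) + ε * ∑ a, d (t + 1) s a := by
      simp [Finset.sum_add_distrib, Finset.mul_sum]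
    have rhs : ∑ s', ∑ a, (x t s' a + ε * d t s' a) * p t s' a s
        = (∑ s', ∑ a, x t s' a * p t s' a s) + ε * ∑ s', ∑ a, d t s' a * p t s' a s := by
      simp [add_mul, Finset.sum_add_distrib, Finset.mul_sum, mul_assoc]
    rw [lhs, rhs, hxbal, hdbal]

/-- Existence of a minimizer of `objF` over the feasible set. -/
lemma exists_min (p : ZMod n → S → A → S → ℝ)
    (c : ZMod n → S → A → ℝ) (η lam β : ℝ)
    (hX : ∃ x, Feasible p x) :
    ∃ x, Feasible p x ∧ ∀ y, Feasible p y → objF c lam β x η ≤ objF c lam β y η := by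
  obtain ⟨x0, hx0⟩ := hX
  have hev : ∀ (t : ZMod n) (s : S) (a : A),
      Continuous fun x : ZMod n → S → A → ℝ => x t s a := fun t s a =>
    (continuous_apply a).comp ((continuous_apply s).comp (continuous_apply t))
  have hsum1 : ∀ t : ZMod n, Continuous fun x : ZMod n → S → A → ℝ => ∑ s, ∑ a, x t s a :=
    fun t => continuous_finset_sum _ fun s _ => continuous_finset_sum _ fun a _ => hev t s a
  have hclosed : IsClosed {x : ZMod n → S → A → ℝ | Feasible p x} := by
    have : {x : ZMod n → S → A → ℝ | Feasible p x}
        = (⋂ t, ⋂ s, ⋂ a, {x : ZMod n → S → A → ℝ | 0 ≤ x t s a}) ∩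
          ((⋂ t, {x : ZMod n → S → A → ℝ | ∑ s, ∑ a, x t s a = 1}) ∩
           (⋂ t, ⋂ s, {x : ZMod n → S → A → ℝ |
             ∑ a, x (t + 1) s a = ∑ s', ∑ a, x t s' a * p t s' a s})) := by
      ext x
      simp only [Feasible, Set.mem_setOf_eq, Set.mem_inter_iff, Set.mem_iInter]
    rw [this]
    refine IsClosed.inter ?_ (IsClosed.inter ?_ ?_)
    · exact isClosed_iInter fun t => isClosed_iInter fun s => isClosed_iInter fun a =>
        isClosed_le continuous_const (hev t s a)
    · exact isClosed_iInter fun t => isClosed_eq (hsum1 t) continuous_const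
    · refine isClosed_iInter fun t => isClosed_iInter fun s => isClosed_eq ?_ ?_
      · exact continuous_finset_sum _ fun a _ => hev (t + 1) s a
      · exact continuous_finset_sum _ fun s' _ =>
          continuous_finset_sum _ fun a _ => (hev t s' a).mul continuous_const
  have hcompactbox : IsCompact (Set.pi Set.univ fun _ : ZMod n =>
      Set.pi Set.univ fun _ : S => Set.pi Set.univ fun _ : A => Set.Icc (0:ℝ) 1) :=
    isCompact_univ_pi fun _ => isCompact_univ_pi fun _ => isCompact_univ_pi fun _ =>
      isCompact_Icc
  have hsubset : {x : ZMod n → S → A → ℝ | Feasible p x} ⊆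
      Set.pi Set.univ (fun _ : ZMod n =>
        Set.pi Set.univ fun _ : S => Set.pi Set.univ fun _ : A => Set.Icc (0:ℝ) 1) := by
    intro x hx
    obtain ⟨hxpos, hxsum, _⟩ := hx
    intro t _ ; intro s _ ; intro a _
    refine ⟨hxpos t s a, ?_⟩
    calc x t s a ≤ ∑ a', x t s a' :=
          Finset.single_le_sum (fun a' _ => hxpos t s a') (mem_univ a)
      _ ≤ ∑ s', ∑ a', x t s' a' :=
          Finset.single_le_sum
            (fun s' _ => Finset.sum_nonneg fun a' _ => hxpos t s' a') (mem_univ s)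
      _ = 1 := hxsum t
  have hcompact : IsCompact {x : ZMod n → S → A → ℝ | Feasible p x} :=
    hcompactbox.of_isClosed_subset hclosed hsubset
  have hcont : Continuous fun x : ZMod n → S → A → ℝ => objF c lam β x η := by
    simp only [objF]
    refine continuous_const.mul ?_
    refine continuous_finset_sum _ fun t _ => continuous_finset_sum _ fun s _ =>
      continuous_finset_sum _ fun a _ => ?_
    exact (continuous_const.mul (hev t s a)).add
      ((continuous_const.mul (hev t s a)).mul continuous_const)
  obtain ⟨x, hxF, hmin⟩ := hcompact.exists_isMinOn ⟨x0, hx0⟩ hcont.continuousOn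
  exact ⟨x, hxF, fun y hy => hmin hy⟩

/-- Purification: from any minimizer, produce a deterministic minimizer, by induction on
the support size. -/
lemma purify (p : ZMod n → S → A → S → ℝ)
    (hp0 : ∀ t s a s', 0 ≤ p t s a s') (hp1 : ∀ t s a, ∑ s', p t s a s' = 1)
    (c : ZMod n → S → A → ℝ) (η lam β : ℝ) :
    ∀ (m : ℕ) (x : ZMod n → S → A → ℝ), Feasible p x →
      (∀ y, Feasible p y → objF c lam β x η ≤ objF c lam β y η) →
      {u : ZMod n × S × A | x u.1 u.2.1 u.2.2 ≠ 0}.ncard ≤ m →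
      ∃ x', Feasible p x' ∧
        (∀ y, Feasible p y → objF c lam β x' η ≤ objF c lam β y η) ∧
        (∀ t s a a', 0 < x' t s a → 0 < x' t s a' → a = a') := by
  intro m
  induction m with
  | zero =>
    intro x hx hmin hcard
    refine ⟨x, hx, hmin, fun t s a a' hpos _ => ?_⟩
    exfalso
    have hne : {u : ZMod n × S × A | x u.1 u.2.1 u.2.2 ≠ 0}.Nonempty :=
      ⟨(t, s, a), ne_of_gt hpos⟩
    have := Set.ncard_pos (Set.toFinite _) |>.mpr hne
    omega
  | succ m ih =>
    intro x hx hmin hcard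
    by_cases hdet : ∀ t s a a', 0 < x t s a → 0 < x t s a' → a = a'
    · exact ⟨x, hx, hmin, hdet⟩
    push_neg at hdet
    obtain ⟨t0, s0, a1, a2, hpos1, hpos2, hne12⟩ := hdet
    obtain ⟨d, hdne, hsupp, hdsum, hdbal⟩ :=
      exists_direction p hp0 hp1 x hx t0 s0 a1 a2 hne12 (ne_of_gt hpos1) (ne_of_gt hpos2)
    have hxpos := hx.1
    -- the linear part of the objective along d is zero
    have hd_exists : ∃ u : ZMod n × S × A, d u.1 u.2.1 u.2.2 ≠ 0 := by
      by_contra hno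
      push_neg at hno
      apply hdne
      funext t s a
      exact hno (t, s, a)
    obtain ⟨u0, hu0⟩ := hd_exists
    have hxpos_of_d : ∀ u : ZMod n × S × A, d u.1 u.2.1 u.2.2 ≠ 0 →
        0 < x u.1 u.2.1 u.2.2 := by
      intro u hu
      rcases lt_or_eq_of_le (hxpos u.1 u.2.1 u.2.2) with h | h
      · exact h
      · exact absurd (hsupp _ _ _ h.symm) hu
    -- ε₀ allowing perturbation in both directions
    have hF0ne : (univ.filter fun u : ZMod n × S × A => d u.1 u.2.1 u.2.2 ≠ 0).Nonempty :=
      ⟨u0, by simp [hu0]⟩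
    obtain ⟨w0, hw0F, hw0min⟩ := Finset.exists_min_image _
      (fun u : ZMod n × S × A => x u.1 u.2.1 u.2.2 / |d u.1 u.2.1 u.2.2|) hF0ne
    have hw0d : d w0.1 w0.2.1 w0.2.2 ≠ 0 := by
      simpa using (Finset.mem_filter.mp hw0F).2
    set ε₀ : ℝ := x w0.1 w0.2.1 w0.2.2 / |d w0.1 w0.2.1 w0.2.2| with hε₀
    have hε₀pos : 0 < ε₀ :=
      div_pos (hxpos_of_d w0 hw0d) (abs_pos.mpr hw0d)
    have hboth : ∀ ε : ℝ, |ε| ≤ ε₀ → Feasible p (fun t s a => x t s a + ε * d t s a) := by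
      intro ε hε
      refine feasible_combo p x d hx hdsum hdbal ε ?_
      intro t s a
      by_cases hda : d t s a = 0
      · simp [hda, hxpos t s a]
      · have hmem : (t, s, a) ∈ univ.filter
            fun u : ZMod n × S × A => d u.1 u.2.1 u.2.2 ≠ 0 := by simp [hda]
        have hle : ε₀ ≤ x t s a / |d t s a| := hw0min _ hmem
        have habs : |d t s a| > 0 := abs_pos.mpr hda
        have h1 : ε₀ * |d t s a| ≤ x t s a := by
          rw [← le_div_iff₀ habs]
          exact hle
        have h2 : |ε * d t s a| ≤ x t s a := by
          rw [abs_mul]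
          calc |ε| * |d t s a| ≤ ε₀ * |d t s a| :=
                mul_le_mul_of_nonneg_right hε (abs_nonneg _)
            _ ≤ x t s a := h1
        have := neg_abs_le (ε * d t s a)
        linarith [abs_le.mp h2]
    have hL : objF c lam β d η = 0 := by
      have hplus := hmin _ (hboth ε₀ (by rw [abs_of_pos hε₀pos]))
      have hminus := hmin _ (hboth (-ε₀) (by rw [abs_neg, abs_of_pos hε₀pos]))
      rw [objF_combo] at hplus hminus
      nlinarith
    -- find a negative coordinate
    have hneg_exists : ∃ u : ZMod n × S × A, d u.1 u.2.1 u.2.2 < 0 := by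
      by_contra hno
      push_neg at hno
      rcases lt_trichotomy (d u0.1 u0.2.1 u0.2.2) 0 with h | h | h
      · exact absurd h (not_lt.mpr (hno u0))
      · exact hu0 h
      · have hsum := hdsum u0.1
        have h1 : d u0.1 u0.2.1 u0.2.2 ≤ ∑ a, d u0.1 u0.2.1 a :=
          Finset.single_le_sum (fun a _ => hno (u0.1, u0.2.1, a)) (mem_univ _)
        have h2 : ∑ a, d u0.1 u0.2.1 a ≤ ∑ s, ∑ a, d u0.1 s a :=
          Finset.single_le_sum
            (fun s _ => Finset.sum_nonneg fun a _ => hno (u0.1, s, a)) (mem_univ _)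
        linarith
    obtain ⟨w, hw⟩ := hneg_exists
    have hF1ne : (univ.filter fun u : ZMod n × S × A => d u.1 u.2.1 u.2.2 < 0).Nonempty :=
      ⟨w, by simp [hw]⟩
    obtain ⟨w1, hw1F, hw1min⟩ := Finset.exists_min_image _
      (fun u : ZMod n × S × A => x u.1 u.2.1 u.2.2 / (-(d u.1 u.2.1 u.2.2))) hF1ne
    have hw1d : d w1.1 w1.2.1 w1.2.2 < 0 := by
      simpa using (Finset.mem_filter.mp hw1F).2
    set ε₁ : ℝ := x w1.1 w1.2.1 w1.2.2 / (-(d w1.1 w1.2.1 w1.2.2)) with hε₁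
    have hε₁pos : 0 < ε₁ :=
      div_pos (hxpos_of_d w1 (ne_of_lt hw1d)) (neg_pos.mpr hw1d)
    set x' : ZMod n → S → A → ℝ := fun t s a => x t s a + ε₁ * d t s a with hx'def
    have hx'pos : ∀ t s a, 0 ≤ x' t s a := by
      intro t s a
      rcases le_or_gt 0 (d t s a) with h | h
      · exact add_nonneg (hxpos t s a) (mul_nonneg (le_of_lt hε₁pos) h)
      · have hmem : (t, s, a) ∈ univ.filter
            fun u : ZMod n × S × A => d u.1 u.2.1 u.2.2 < 0 := by simp [h]
        have hle : ε₁ ≤ x t s a / (-(d t s a)) := hw1min _ hmem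
        have h1 : ε₁ * (-(d t s a)) ≤ x t s a := by
          rw [← le_div_iff₀ (neg_pos.mpr h)]
          exact hle
        simp only [hx'def]
        nlinarith
    have hx'feas : Feasible p x' := feasible_combo p x d hx hdsum hdbal ε₁ hx'pos
    have hx'obj : objF c lam β x' η = objF c lam β x η := by
      rw [hx'def, objF_combo, hL, mul_zero, add_zero]
    have hx'min : ∀ y, Feasible p y → objF c lam β x' η ≤ objF c lam β y η := by
      intro y hy
      rw [hx'obj]
      exact hmin y hy
    -- support strictly decreases
    have hsub : {u : ZMod n × S × A | x' u.1 u.2.1 u.2.2 ≠ 0}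
        ⊆ {u : ZMod n × S × A | x u.1 u.2.1 u.2.2 ≠ 0} := by
      intro u hu
      simp only [Set.mem_setOf_eq] at hu ⊢
      intro h0
      apply hu
      simp only [hx'def, h0, hsupp _ _ _ h0, mul_zero, add_zero]
    have hw1x' : x' w1.1 w1.2.1 w1.2.2 = 0 := by
      have hdn : d w1.1 w1.2.1 w1.2.2 ≠ 0 := ne_of_lt hw1d
      have hdn' : -d w1.1 w1.2.1 w1.2.2 ≠ 0 := neg_ne_zero.mpr hdn
      simp only [hx'def, hε₁]
      field_simp
      ring
    have hw1x : x w1.1 w1.2.1 w1.2.2 ≠ 0 := ne_of_gt (hxpos_of_d w1 (ne_of_lt hw1d))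
    have hssub : {u : ZMod n × S × A | x' u.1 u.2.1 u.2.2 ≠ 0}
        ⊂ {u : ZMod n × S × A | x u.1 u.2.1 u.2.2 ≠ 0} := by
      refine ⟨hsub, fun hcontra => ?_⟩
      have : w1 ∈ {u : ZMod n × S × A | x' u.1 u.2.1 u.2.2 ≠ 0} := hcontra hw1x
      exact this hw1x'
    have hlt : {u : ZMod n × S × A | x' u.1 u.2.1 u.2.2 ≠ 0}.ncard
        < {u : ZMod n × S × A | x u.1 u.2.1 u.2.2 ≠ 0}.ncard :=
      Set.ncard_lt_ncard hssub (Set.toFinite _)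
    exact ih x' hx'feas hx'min (by omega)

end Helpers

/-- For fixed `η`, the LP `min_{x ∈ X} f(x, η)` attains its minimum at a
deterministic policy. -/
theorem stmt1 (n : ℕ) [NeZero n] (S A : Type*) [Fintype S] [Nonempty S]
    [Fintype A] [Nonempty A]
    (p : ZMod n → S → A → S → ℝ)
    (hp0 : ∀ t s a s', 0 ≤ p t s a s')
    (hp1 : ∀ t s a, ∑ s', p t s a s' = 1)
    (c : ZMod n → S → A → ℝ)
    (η lam β : ℝ) (hlam : 0 ≤ lam) (hβ0 : 0 ≤ β) (hβ1 : β ≤ 1)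
    (hX : ∃ x, Feasible p x) :
    ∃ x : ZMod n → S → A → ℝ, Feasible p x ∧
      (∀ y : ZMod n → S → A → ℝ, Feasible p y →
        objF c lam β x η ≤ objF c lam β y η) ∧
      (∀ t s a a', 0 < x t s a → 0 < x t s a' → a = a') := by
  obtain ⟨x0, hx0F, hx0min⟩ := exists_min p c η lam β hX
  exact purify p hp0 hp1 c η lam β
    ({u : ZMod n × S × A | x0 u.1 u.2.1 u.2.2 ≠ 0}.ncard) x0 hx0F hx0min le_rfl
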